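/- arXiv:1702.02866 — 2 statements merged into one kernel-verified Lean document; each statement's English description precedes it below -/
import Mathlib

section
/- Let K ∈ 𝒦 with associated eigenvalue sequence λ(h) = Λ_{j(h)} for h ∈ ℋ. Then for every pair x ≠ y in ℝ⁺, the series Σ_{h∈ℋ} λ(h) h(x) h(y) converges absolutely and K(x,y) = Σ_{h∈ℋ} λ(h) h(x) h(y). -/
open MeasureTheory Set Filter
open scoped ENNReal

/-- The dyadic distance on ℝ⁺: the infimum of the lengths of the dyadic
intervals `[k·2^{-j}, (k+1)·2^{-j})` containing both points (and `0` on the diagonal). -/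
noncomputable def dyadicDist (x y : ℝ) : ℝ :=
  if x = y then 0
  else sInf {r : ℝ | ∃ (j : ℤ) (k : ℕ), r = (2:ℝ) ^ (-j) ∧
    x ∈ Set.Ico ((k : ℝ) * (2:ℝ) ^ (-j)) (((k : ℝ) + 1) * (2:ℝ) ^ (-j)) ∧
    y ∈ Set.Ico ((k : ℝ) * (2:ℝ) ^ (-j)) (((k : ℝ) + 1) * (2:ℝ) ^ (-j))}

/-- The sequence `α_l = 2^{-l}(k_{-l} - k_{-l+1})` associated to the level values `k` of a
kernel in `𝒦`. -/
noncomputable def alphaOf (k : ℤ → ℝ) (l : ℤ) : ℝ :=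
  (2:ℝ) ^ (-l) * (k (-l) - k (-l + 1))

/-- The profile `φ(s) = Σ_{l∈ℤ} α_l 2^l χ_{(0,2^{-l}]}(s)` associated to the level values `k`. -/
noncomputable def phiOf (k : ℤ → ℝ) (s : ℝ) : ℝ :=
  ∑' l : ℤ, alphaOf k l * ((2:ℝ) ^ l * (if s ∈ Set.Ioc (0:ℝ) ((2:ℝ) ^ (-l)) then 1 else 0))

/-- The sequence `Λ_j = Σ_{l>j} α_l` associated to the level values `k`. -/
noncomputable def LambdaOf (k : ℤ → ℝ) (j : ℤ) : ℝ :=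
  ∑' m : ℕ, alphaOf k (j + 1 + m)

/-- The Haar function `h^j_k(x) = 2^{j/2}(χ_{[0,1/2)} - χ_{[1/2,1)})(2^j x - k)`,
supported in the dyadic interval `I^j_k = [k·2^{-j},(k+1)·2^{-j})`. -/
noncomputable def haarFn (j : ℤ) (k : ℕ) (x : ℝ) : ℝ :=
  (2:ℝ) ^ ((j : ℝ) / 2) *
    (if (2:ℝ) ^ j * x - (k : ℝ) ∈ Set.Ico (0:ℝ) (1/2) then 1
     else if (2:ℝ) ^ j * x - (k : ℝ) ∈ Set.Ico (1/2 : ℝ) 1 then -1 else 0)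


open Topology

noncomputable def dk (j : ℤ) (x : ℝ) : ℕ := ⌊(2:ℝ)^j * x⌋₊

lemma two_zpow_pos (j : ℤ) : (0:ℝ) < 2^j := by positivity

lemma mem_Ico_iff_dk {x : ℝ} (hx : 0 ≤ x) (j : ℤ) (n : ℕ) :
    x ∈ Set.Ico ((n : ℝ) * (2:ℝ) ^ (-j)) (((n : ℝ) + 1) * (2:ℝ) ^ (-j)) ↔ dk j x = n := by
  have h2 : (0:ℝ) < 2^j := two_zpow_pos j
  rw [dk, Nat.floor_eq_iff (by positivity)]
  rw [Set.mem_Ico, zpow_neg]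
  constructor
  · rintro ⟨h1, h2'⟩
    constructor
    · calc (n:ℝ) = n * (2^j)⁻¹ * 2^j := by field_simp
        _ ≤ x * 2^j := by nlinarith
        _ = 2^j * x := mul_comm _ _
    · calc (2:ℝ)^j * x < 2^j * (((n:ℝ)+1) * (2^j)⁻¹) := by nlinarith
        _ = (n:ℝ)+1 := by field_simp
  · rintro ⟨h1, h2'⟩
    constructor
    · calc (n:ℝ) * (2^j)⁻¹ ≤ (2^j * x) * (2^j)⁻¹ := by nlinarith [inv_pos.2 h2]
        _ = x := by field_simp
    · calc x = (2^j * x) * (2^j)⁻¹ := by field_simp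
        _ < ((n:ℝ)+1) * (2^j)⁻¹ := by nlinarith [inv_pos.2 h2]

lemma dk_pred (j : ℤ) (x : ℝ) : dk (j-1) x = dk j x / 2 := by
  have h : (2:ℝ)^(j-1) * x = ((2:ℝ)^j * x) / ((2:ℕ):ℝ) := by
    rw [zpow_sub₀ (by norm_num)]; push_cast; ring
  rw [dk, h, Nat.floor_div_natCast]; rfl

lemma dk_succ (j : ℤ) (x : ℝ) : dk j x = dk (j+1) x / 2 := by
  have := dk_pred (j+1) x; simpa using this

lemma dk_anti {x y : ℝ} {j : ℤ} (h : dk j x = dk j y) {i : ℤ} (hij : i ≤ j) :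
    dk i x = dk i y := by
  have key : ∀ d : ℕ, dk (j - d) x = dk (j - d) y := by
    intro d
    induction d with
    | zero => simpa using h
    | succ n ih =>
      have h1 : (j - ((n+1 : ℕ)) : ℤ) = (j - n) - 1 := by push_cast; ring
      rw [h1, dk_pred, dk_pred, ih]
  have hd : i = j - ((j - i).toNat : ℤ) := by omega
  rw [hd]; exact key _

lemma abs_sub_lt_of_dk_eq {x y : ℝ} (hx : 0 ≤ x) (hy : 0 ≤ y) {j : ℤ}
    (h : dk j x = dk j y) : |(2:ℝ)^j * x - (2:ℝ)^j * y| < 1 := by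
  have h1 := Nat.floor_le (show (0:ℝ) ≤ 2^j * x by positivity)
  have h2 := Nat.lt_floor_add_one ((2:ℝ)^j * x)
  have h3 := Nat.floor_le (show (0:ℝ) ≤ 2^j * y by positivity)
  have h4 := Nat.lt_floor_add_one ((2:ℝ)^j * y)
  rw [abs_lt]; rw [dk, dk] at h
  constructor <;> [skip; skip] <;> rw [h] at h1 h2 <;> linarith

lemma exists_j0 {x y : ℝ} (hx : 0 ≤ x) (hy : 0 ≤ y) (hxy : x ≠ y) :
    ∃ j0 : ℤ, dk j0 x = dk j0 y ∧ dk (j0+1) x ≠ dk (j0+1) y ∧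
      ∀ j : ℤ, dk j x = dk j y → j ≤ j0 := by
  have habs : 0 < |x - y| := by
    rw [abs_pos]; exact sub_ne_zero_of_ne hxy
  obtain ⟨n, hn⟩ := pow_unbounded_of_one_lt (|x - y|⁻¹) (show (1:ℝ) < 2 by norm_num)
  have hbdd : ∀ z : ℤ, dk z x = dk z y → z ≤ n := by
    intro z hz
    by_contra hc
    push_neg at hc
    have h1 : dk (n : ℤ) x = dk (n : ℤ) y := dk_anti hz (by omega)
    have h2 := abs_sub_lt_of_dk_eq hx hy h1
    have h3 : (2:ℝ)^(n:ℤ) * x - (2:ℝ)^(n:ℤ) * y = 2^(n:ℤ) * (x - y) := by ring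
    rw [h3, abs_mul, abs_of_pos (two_zpow_pos _)] at h2
    have h4 : (2:ℝ)^(n:ℤ) = 2^n := zpow_natCast 2 n
    rw [h4] at h2
    have h5 : (1:ℝ) < 2^n * |x - y| := by
      nlinarith [mul_lt_mul_of_pos_left hn habs, mul_inv_cancel₀ (ne_of_gt habs)]
    linarith
  obtain ⟨m, hm⟩ := pow_unbounded_of_one_lt (max x y) (show (1:ℝ) < 2 by norm_num)
  have hinh : dk (-(m:ℤ)) x = dk (-(m:ℤ)) y := by
    have hfx : dk (-(m:ℤ)) x = 0 := by
      rw [dk, Nat.floor_eq_zero]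
      have : (2:ℝ)^(-(m:ℤ)) * x < 2^(-(m:ℤ)) * 2^m := by
        have := two_zpow_pos (-(m:ℤ))
        have hxm : x < 2^m := lt_of_le_of_lt (le_max_left x y) hm
        nlinarith
      calc (2:ℝ)^(-(m:ℤ)) * x < 2^(-(m:ℤ)) * 2^m := this
        _ = 1 := by rw [← zpow_natCast (2:ℝ) m, ← zpow_add₀ (by norm_num : (2:ℝ) ≠ 0)]; simp
    have hfy : dk (-(m:ℤ)) y = 0 := by
      rw [dk, Nat.floor_eq_zero]
      have hym : y < 2^m := lt_of_le_of_lt (le_max_right x y) hm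
      have := two_zpow_pos (-(m:ℤ))
      calc (2:ℝ)^(-(m:ℤ)) * y < 2^(-(m:ℤ)) * 2^m := by nlinarith
        _ = 1 := by rw [← zpow_natCast (2:ℝ) m, ← zpow_add₀ (by norm_num : (2:ℝ) ≠ 0)]; simp
    rw [hfx, hfy]
  obtain ⟨j0, hj0, hmax⟩ := Int.exists_greatest_of_bdd ⟨n, hbdd⟩ ⟨-(m:ℤ), hinh⟩
  exact ⟨j0, hj0, fun hc => by have := hmax _ hc; omega, hmax⟩

lemma dyadicDist_eq_zpow {x y : ℝ} (hx : 0 ≤ x) (hy : 0 ≤ y) (hxy : x ≠ y) {j0 : ℤ}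
    (hP : dk j0 x = dk j0 y) (hnP : dk (j0+1) x ≠ dk (j0+1) y) :
    dyadicDist x y = (2:ℝ)^(-j0) := by
  rw [dyadicDist, if_neg hxy]
  apply le_antisymm
  · apply csInf_le
    · refine ⟨0, fun r hr => ?_⟩
      obtain ⟨j, n, rfl, _, _⟩ := hr
      positivity
    · exact ⟨j0, dk j0 x, rfl, (mem_Ico_iff_dk hx j0 _).2 rfl,
        (mem_Ico_iff_dk hy j0 _).2 hP.symm⟩
  · apply le_csInf
    · exact ⟨_, j0, dk j0 x, rfl, (mem_Ico_iff_dk hx j0 _).2 rfl,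
        (mem_Ico_iff_dk hy j0 _).2 hP.symm⟩
    · rintro r ⟨j, n, rfl, hxi, hyi⟩
      have h1 : dk j x = n := (mem_Ico_iff_dk hx j n).1 hxi
      have h2 : dk j y = n := (mem_Ico_iff_dk hy j n).1 hyi
      have hj : j ≤ j0 := by
        by_contra hc
        push_neg at hc
        exact hnP (dk_anti (h1.trans h2.symm) (by omega))
      exact zpow_le_zpow_right₀ (by norm_num) (by omega)

lemma dk_succ' (j : ℤ) (x : ℝ) : dk j x = dk (j+1) x / 2 := by
  have h : (2:ℝ)^j * x = ((2:ℝ)^(j+1) * x) / ((2:ℕ):ℝ) := by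
    rw [zpow_add₀ (by norm_num : (2:ℝ) ≠ 0)]; push_cast; ring
  rw [dk, h, Nat.floor_div_natCast]; rfl

lemma dk_succ_cases (j : ℤ) (x : ℝ) :
    dk (j+1) x = 2 * dk j x ∨ dk (j+1) x = 2 * dk j x + 1 := by
  have := dk_succ' j x; omega

-- the square of the rpow factor
lemma rpow_half_sq (j : ℤ) : (2:ℝ) ^ ((j : ℝ)/2) * (2:ℝ) ^ ((j : ℝ)/2) = (2:ℝ)^j := by
  rw [← Real.rpow_add (by norm_num : (0:ℝ) < 2)]
  have h : (j:ℝ)/2 + (j:ℝ)/2 = ((j:ℤ):ℝ) := by ring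
  rw [h, Real.rpow_intCast]

lemma haar_eq_zero {x : ℝ} (hx : 0 ≤ x) {j : ℤ} {n : ℕ} (h : dk j x ≠ n) :
    haarFn j n x = 0 := by
  have hfl : ¬ ((n:ℝ) ≤ 2^j * x ∧ 2^j * x < (n:ℝ) + 1) := by
    intro hc
    exact h ((Nat.floor_eq_iff (by positivity)).2 hc)
  rw [haarFn]
  split_ifs with h1 h2
  · exact absurd ⟨by linarith [h1.1], by linarith [h1.2]⟩ hfl
  · exact absurd ⟨by linarith [h2.1], by linarith [h2.2]⟩ hfl
  · ring

lemma haar_val_left {x : ℝ} (hx : 0 ≤ x) {j : ℤ} (h : dk (j+1) x = 2 * dk j x) :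
    haarFn j (dk j x) x = (2:ℝ) ^ ((j : ℝ)/2) := by
  have h1 : (2:ℝ)^(j+1) * x = 2 * (2^j * x) := by
    rw [zpow_add₀ (by norm_num : (2:ℝ) ≠ 0)]; ring
  have h2 : ((dk (j+1) x : ℕ) : ℝ) ≤ 2^(j+1) * x ∧ 2^(j+1) * x < (dk (j+1) x : ℕ) + 1 :=
    ⟨Nat.floor_le (by positivity), Nat.lt_floor_add_one _⟩
  rw [h, h1] at h2
  push_cast at h2
  have hlb : ((dk j x : ℕ) : ℝ) ≤ 2^j * x := Nat.floor_le (by positivity)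
  rw [haarFn, if_pos]
  · ring
  · exact Set.mem_Ico.2 ⟨by linarith, by linarith [h2.2]⟩

lemma haar_val_right {x : ℝ} (hx : 0 ≤ x) {j : ℤ} (h : dk (j+1) x = 2 * dk j x + 1) :
    haarFn j (dk j x) x = -((2:ℝ) ^ ((j : ℝ)/2)) := by
  have h1 : (2:ℝ)^(j+1) * x = 2 * (2^j * x) := by
    rw [zpow_add₀ (by norm_num : (2:ℝ) ≠ 0)]; ring
  have h2 : ((dk (j+1) x : ℕ) : ℝ) ≤ 2^(j+1) * x ∧ 2^(j+1) * x < (dk (j+1) x : ℕ) + 1 :=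
    ⟨Nat.floor_le (by positivity), Nat.lt_floor_add_one _⟩
  rw [h, h1] at h2
  push_cast at h2
  have hub : 2^j * x < ((dk j x : ℕ) : ℝ) + 1 := Nat.lt_floor_add_one _
  rw [haarFn, if_neg, if_pos]
  · ring
  · exact Set.mem_Ico.2 ⟨by linarith [h2.1], by linarith [hub]⟩
  · rw [Set.mem_Ico]
    rintro ⟨_, hc⟩
    linarith [h2.1]

lemma haar_prod_same {x y : ℝ} (hx : 0 ≤ x) (hy : 0 ≤ y) {j : ℤ}
    (hP1 : dk (j+1) x = dk (j+1) y) :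
    haarFn j (dk j x) x * haarFn j (dk j x) y = (2:ℝ)^j := by
  have hP : dk j x = dk j y := by rw [dk_succ' j x, dk_succ' j y, hP1]
  rcases dk_succ_cases j x with h | h
  · have hvy := haar_val_left hy (show dk (j+1) y = 2 * dk j y by rw [← hP1, ← hP]; exact h)
    rw [← hP] at hvy
    rw [haar_val_left hx h, hvy, rpow_half_sq]
  · have hvy := haar_val_right hy (show dk (j+1) y = 2 * dk j y + 1 by rw [← hP1, ← hP]; exact h)
    rw [← hP] at hvy
    rw [haar_val_right hx h, hvy, neg_mul_neg, rpow_half_sq]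

lemma haar_prod_opp {x y : ℝ} (hx : 0 ≤ x) (hy : 0 ≤ y) {j : ℤ}
    (hP : dk j x = dk j y) (hnP : dk (j+1) x ≠ dk (j+1) y) :
    haarFn j (dk j x) x * haarFn j (dk j x) y = -((2:ℝ)^j) := by
  rcases dk_succ_cases j x with h | h <;> rcases dk_succ_cases j y with h' | h'
  · exfalso; apply hnP; rw [h, h', hP]
  · have hvy := haar_val_right hy h'
    rw [← hP] at hvy
    rw [haar_val_left hx h, hvy, mul_neg, rpow_half_sq]
  · have hvy := haar_val_left hy h'
    rw [← hP] at hvy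
    rw [haar_val_right hx h, hvy, neg_mul, rpow_half_sq]
  · exfalso; apply hnP; rw [h, h', hP]

noncomputable def Stail (k : ℤ → ℝ) (J : ℤ) : ℝ :=
  ∑' n : ℕ, (2:ℝ)^(-(J+1+(n:ℤ))) * k (-(J+1+(n:ℤ)))

noncomputable def Fof (k : ℤ → ℝ) (J : ℤ) : ℝ := k (-J)/2 + 2^(J-1) * Stail k J

section series
variable {k : ℤ → ℝ} (hk0 : ∀ m : ℤ, 0 ≤ k m)
  (hsum : Summable (fun m : ℤ => (2:ℝ)^m * k m))

lemma zpow_mul_zpow (a b : ℤ) : (2:ℝ)^a * (2:ℝ)^b = (2:ℝ)^(a+b) :=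
  (zpow_add₀ (by norm_num : (2:ℝ) ≠ 0) a b).symm

include hsum in
lemma tail_summable (J : ℤ) :
    Summable (fun n : ℕ => (2:ℝ)^(-(J+1+(n:ℤ))) * k (-(J+1+(n:ℤ)))) := by
  have hinj : Function.Injective (fun n : ℕ => -(J+1+(n:ℤ))) := by
    intro a b h; simp only at h; omega
  exact hsum.comp_injective hinj

include hk0 hsum in
lemma Stail_nonneg (J : ℤ) : 0 ≤ Stail k J :=
  tsum_nonneg fun n => mul_nonneg (le_of_lt (by positivity)) (hk0 _)

include hk0 hsum in
lemma Stail_le (J : ℤ) : Stail k J ≤ ∑' m : ℤ, (2:ℝ)^m * k m := by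
  refine Summable.tsum_le_tsum_of_inj (fun n : ℕ => -(J+1+(n:ℤ)))
    (fun a b h => by simp only at h; omega)
    (fun c _ => mul_nonneg (le_of_lt (by positivity)) (hk0 _))
    (fun n => le_refl _) (tail_summable hsum J) hsum

include hsum in
lemma Stail_rec (J : ℤ) : Stail k (J-1) = 2^(-J) * k (-J) + Stail k J := by
  rw [Stail, Summable.tsum_eq_zero_add (tail_summable hsum (J-1))]
  congr 1
  · norm_num
  · rw [Stail]
    apply tsum_congr
    intro n
    have h1 : -(J-1+1+((n+1 : ℕ) : ℤ)) = -(J+1+(n:ℤ)) := by push_cast; ring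
    rw [h1]

include hsum in
lemma Lambda_formula (J : ℤ) :
    LambdaOf k J = Stail k J / 2 - 2^(-J-1) * k (-J) := by
  have ha := tail_summable hsum J
  have ha' := tail_summable hsum (J-1)
  have hb : Summable (fun n : ℕ => (1/2 : ℝ) * ((2:ℝ)^(-(J-1+1+(n:ℤ))) * k (-(J-1+1+(n:ℤ))))) :=
    ha'.mul_left _
  have key : ∀ n : ℕ, alphaOf k (J + 1 + n) =
      (2:ℝ)^(-(J+1+(n:ℤ))) * k (-(J+1+(n:ℤ)))
        - (1/2 : ℝ) * ((2:ℝ)^(-(J-1+1+(n:ℤ))) * k (-(J-1+1+(n:ℤ)))) := by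
    intro n
    rw [alphaOf, mul_sub]
    congr 1
    have e1 : -(J + 1 + (n:ℤ)) + 1 = -(J-1+1+(n:ℤ)) := by ring
    have e2 : (1/2 : ℝ) * (2:ℝ)^(-(J-1+1+(n:ℤ))) = (2:ℝ)^(-(J+1+(n:ℤ))) := by
      have : (1/2 : ℝ) = (2:ℝ)^(-1 : ℤ) := by norm_num
      rw [this, zpow_mul_zpow]
      congr 1; ring
    rw [e1, ← e2, mul_assoc]
  rw [LambdaOf]
  calc (∑' n : ℕ, alphaOf k (J + 1 + n))
      = ∑' n : ℕ, ((2:ℝ)^(-(J+1+(n:ℤ))) * k (-(J+1+(n:ℤ)))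
        - (1/2 : ℝ) * ((2:ℝ)^(-(J-1+1+(n:ℤ))) * k (-(J-1+1+(n:ℤ))))) := tsum_congr key
    _ = Stail k J - (1/2) * Stail k (J-1) := by
        rw [Summable.tsum_sub ha hb, tsum_mul_left]; rfl
    _ = Stail k J / 2 - 2^(-J-1) * k (-J) := by
        rw [Stail_rec hsum J]
        have : (2:ℝ)^(-J-1) = (1/2) * 2^(-J) := by
          have : (1/2 : ℝ) = (2:ℝ)^(-1 : ℤ) := by norm_num
          rw [this, zpow_mul_zpow]; congr 1; ring
        rw [this]; ring

include hsum in
lemma telescope (j : ℤ) : (2:ℝ)^j * LambdaOf k j = Fof k (j+1) - Fof k j := by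
  have hrec : Stail k j = 2^(-j-1) * k (-j-1) + Stail k (j+1) := by
    have h := Stail_rec hsum (j+1)
    rw [show (-(j+1) : ℤ) = -j-1 by ring] at h
    simpa using h
  rw [Lambda_formula hsum j, Fof, Fof, hrec,
    show (j + 1 - 1 : ℤ) = j by ring, show (-(j+1) : ℤ) = -j-1 by ring]
  have e1 : (2:ℝ) * 2^(j-1:ℤ) = 2^(j:ℤ) := by
    rw [zpow_sub_one₀ (by norm_num : (2:ℝ) ≠ 0)]; ring
  have hrq : (2:ℝ)^(j-1:ℤ) * (2:ℝ)^(-j-1:ℤ) = 1/4 := by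
    rw [zpow_mul_zpow, show (j - 1 + (-j-1) : ℤ) = -2 by ring]
    norm_num
  rw [← e1]
  linear_combination (2*(k (-j-1)) - 2*(k (-j))) * hrq

include hk0 hsum in
lemma k_le (m : ℤ) : (2:ℝ)^m * k m ≤ ∑' m : ℤ, (2:ℝ)^m * k m :=
  Summable.le_tsum hsum m (fun j _ => mul_nonneg (le_of_lt (by positivity)) (hk0 _))

include hk0 hsum in
lemma k_le' (J : ℤ) : k (-J) ≤ 2^J * ∑' m : ℤ, (2:ℝ)^m * k m := by
  have h := k_le hk0 hsum (-J)
  have e : (2:ℝ)^(J:ℤ) * 2^(-J:ℤ) = 1 := by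
    rw [zpow_mul_zpow, show (J + -J : ℤ) = 0 by ring]; norm_num
  calc k (-J) = 2^(J:ℤ) * (2^(-J:ℤ) * k (-J)) := by rw [← mul_assoc, e, one_mul]
    _ ≤ 2^(J:ℤ) * ∑' m : ℤ, (2:ℝ)^m * k m := mul_le_mul_of_nonneg_left h (by positivity)

include hk0 hsum in
lemma Fof_nonneg (J : ℤ) : 0 ≤ Fof k J := by
  have := Stail_nonneg hk0 hsum J
  have h2 : (0:ℝ) < 2^(J-1 : ℤ) := by positivity
  have := hk0 (-J)
  rw [Fof]; positivity

include hk0 hsum in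
lemma Fof_le (J : ℤ) : Fof k J ≤ 2^J * ∑' m : ℤ, (2:ℝ)^m * k m := by
  have h1 := k_le' hk0 hsum J
  have h2 : 2^(J-1:ℤ) * Stail k J ≤ 2^(J-1:ℤ) * ∑' m : ℤ, (2:ℝ)^m * k m :=
    mul_le_mul_of_nonneg_left (Stail_le hk0 hsum J) (le_of_lt (by positivity))
  have e1 : (2:ℝ) * 2^(J-1:ℤ) = 2^(J:ℤ) := by
    rw [zpow_sub_one₀ (by norm_num : (2:ℝ) ≠ 0)]; ring
  rw [Fof, ← e1]
  rw [← e1] at h1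
  linarith

include hk0 hsum in
lemma tendsto_Fof (j0 : ℤ) : Tendsto (fun N : ℕ => Fof k (j0 - N)) atTop (𝓝 0) := by
  set Sf := ∑' m : ℤ, (2:ℝ)^m * k m with hSf
  apply squeeze_zero (fun N => Fof_nonneg hk0 hsum _) (fun N => Fof_le hk0 hsum _)
  have heq : ∀ N : ℕ, (2:ℝ)^(j0 - (N:ℤ)) * Sf = (2^j0 * Sf) * (1/2)^N := by
    intro N
    rw [zpow_sub₀ (by norm_num : (2:ℝ) ≠ 0), zpow_natCast]
    field_simp
    rw [mul_right_comm, ← mul_pow]; norm_num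
  show Tendsto (fun N : ℕ => (2:ℝ)^(j0 - (N:ℤ)) * Sf) atTop (𝓝 0)
  simp_rw [heq]
  have := tendsto_pow_atTop_nhds_zero_of_lt_one (show (0:ℝ) ≤ 1/2 by norm_num)
    (show (1/2:ℝ) < 1 by norm_num)
  simpa using this.const_mul ((2:ℝ)^j0 * Sf)

include hk0 hsum in
lemma zpow_Lambda_abs_le (j : ℤ) :
    |(2:ℝ)^j * LambdaOf k j| ≤ 2^j * ∑' m : ℤ, (2:ℝ)^m * k m := by
  set Sf := ∑' m : ℤ, (2:ℝ)^m * k m with hSf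
  rw [Lambda_formula hsum j]
  have hS0 := Stail_nonneg hk0 hsum j
  have hSle := Stail_le hk0 hsum j
  have hk0' := hk0 (-j)
  have hkle : k (-j) ≤ 2^j * Sf := k_le' hk0 hsum j
  have e1 : (2:ℝ)^j * (2:ℝ)^(-j-1) = 1/2 := by
    rw [zpow_mul_zpow, show (j + (-j-1) : ℤ) = -1 by ring]; norm_num
  have hp : (0:ℝ) < 2^(j:ℤ) := by positivity
  rw [mul_sub, abs_sub_le_iff]
  constructor
  · have : (2:ℝ)^j * (Stail k j / 2) ≤ 2^j * Sf / 2 := by nlinarith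
    have h1 : (0:ℝ) ≤ 2^j * (2^(-j-1 : ℤ) * k (-j)) := by positivity
    nlinarith
  · have h1 : (2:ℝ)^j * (2^(-j-1:ℤ) * k (-j)) = k (-j) / 2 := by
      rw [← mul_assoc, e1]; ring
    have h2 : (0:ℝ) ≤ 2^j * (Stail k j / 2) := by positivity
    nlinarith

include hk0 hsum in
lemma hasSum_partial (j0 : ℤ) :
    HasSum (fun n : ℕ => (2:ℝ)^(j0-1-(n:ℤ)) * LambdaOf k (j0-1-(n:ℤ))) (Fof k j0) := by
  set Sf := ∑' m : ℤ, (2:ℝ)^m * k m with hSf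
  have hsummable : Summable (fun n : ℕ => (2:ℝ)^(j0-1-(n:ℤ)) * LambdaOf k (j0-1-(n:ℤ))) := by
    apply Summable.of_norm_bounded (g := fun n : ℕ => (2^(j0-1:ℤ) * Sf) * (1/2)^n)
    · exact (summable_geometric_of_lt_one (by norm_num) (by norm_num)).mul_left _
    · intro n
      have h := zpow_Lambda_abs_le hk0 hsum (j0-1-(n:ℤ))
      have e : (2:ℝ)^(j0-1-(n:ℤ)) = (2:ℝ)^(j0-1:ℤ) * (1/2)^n := by
        rw [zpow_sub₀ (by norm_num : (2:ℝ) ≠ 0), zpow_natCast]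
        field_simp
        rw [← mul_pow]; norm_num
      rw [Real.norm_eq_abs]
      calc |(2:ℝ)^(j0-1-(n:ℤ)) * LambdaOf k (j0-1-(n:ℤ))| ≤ 2^(j0-1-(n:ℤ)) * Sf := h
        _ = (2^(j0-1:ℤ) * Sf) * (1/2)^n := by rw [e]; ring
  have htel : ∀ N : ℕ, ∑ n ∈ Finset.range N, (2:ℝ)^(j0-1-(n:ℤ)) * LambdaOf k (j0-1-(n:ℤ))
      = Fof k j0 - Fof k (j0 - N) := by
    intro N
    have hts := Finset.sum_range_sub' (fun n : ℕ => Fof k (j0 - n)) N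
    simp only [Nat.cast_zero, sub_zero] at hts
    rw [← hts]
    apply Finset.sum_congr rfl
    intro n _
    have e1 : (j0 - 1 - (n:ℤ)) + 1 = j0 - n := by ring
    have e2 : (j0 - ((n+1 : ℕ) : ℤ)) = j0 - 1 - (n:ℤ) := by push_cast; ring
    rw [telescope hsum (j0-1-(n:ℤ)), e1, e2]
  have hlim : Tendsto (fun N : ℕ => ∑ n ∈ Finset.range N,
      (2:ℝ)^(j0-1-(n:ℤ)) * LambdaOf k (j0-1-(n:ℤ))) atTop (𝓝 (Fof k j0)) := by
    simp_rw [htel]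
    have := (tendsto_Fof hk0 hsum j0).const_sub (Fof k j0)
    simpa using this
  have h2 := hsummable.hasSum.tendsto_sum_nat
  have := tendsto_nhds_unique h2 hlim
  rw [← this]
  exact hsummable.hasSum
end series


section main

lemma k_props {K : ℝ → ℝ → ℝ} {k : ℤ → ℝ} {x₀ : ℝ}
    (hK0 : ∀ x y : ℝ, 0 ≤ x → 0 ≤ y → 0 ≤ K x y) (hx₀ : 0 ≤ x₀)
    (hKnorm : (∫ y in Set.Ici (0:ℝ), K x₀ y) = 1)
    (hk : ∀ (j : ℤ) (x y : ℝ), 0 ≤ x → 0 ≤ y → dyadicDist x y = (2:ℝ) ^ j → K x y = k j) :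
    (∀ m : ℤ, 0 ≤ k m) ∧ Summable (fun m : ℤ => (2:ℝ)^m * k m) := by
  classical
  set d : ℤ → ℕ := fun m => dk (-m) x₀ with hd
  set d' : ℤ → ℕ := fun m => dk (-m+1) x₀ with hd'
  set A : ℤ → Set ℝ := fun m =>
    Ico ((d m : ℝ) * 2^(-(-m))) (((d m : ℝ)+1) * 2^(-(-m))) \
    Ico ((d' m : ℝ) * 2^(-(-m+1))) (((d' m : ℝ)+1) * 2^(-(-m+1))) with hA
  have hu : ∀ m : ℤ, (2:ℝ)^(-(-m)) = 2 * 2^(-(-m+1)) := by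
    intro m
    rw [show (-(-m) : ℤ) = (-(-m+1)) + 1 by ring, zpow_add_one₀ (by norm_num : (2:ℝ) ≠ 0)]
    ring
  have hupos : ∀ m : ℤ, (0:ℝ) < 2^(-(-m+1)) := fun m => two_zpow_pos _
  have hcases : ∀ m : ℤ, d' m = 2 * d m ∨ d' m = 2 * d m + 1 := fun m => dk_succ_cases (-m) x₀
  have hsub : ∀ m : ℤ, Ico ((d' m : ℝ) * 2^(-(-m+1))) (((d' m : ℝ)+1) * 2^(-(-m+1))) ⊆
      Ico ((d m : ℝ) * 2^(-(-m))) (((d m : ℝ)+1) * 2^(-(-m))) := by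
    intro m
    apply Set.Ico_subset_Ico <;> rw [hu m] <;> rcases hcases m with h | h <;>
      rw [h] <;> push_cast <;> nlinarith [hupos m]
  have hmemA : ∀ m : ℤ, ∀ y ∈ A m, 0 ≤ y ∧ dk (-m) y = d m ∧ dk (-m+1) y ≠ d' m := by
    intro m y hy
    obtain ⟨hy1, hy2⟩ := hy
    have hy0 : 0 ≤ y := le_trans (by positivity) hy1.1
    refine ⟨hy0, (mem_Ico_iff_dk hy0 (-m) (d m)).1 hy1, fun hc => hy2 ?_⟩
    exact (mem_Ico_iff_dk hy0 (-m+1) (d' m)).2 hc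
  have hdist : ∀ m : ℤ, ∀ y ∈ A m, 0 ≤ y ∧ dyadicDist x₀ y = 2^m := by
    intro m y hy
    obtain ⟨hy0, h1, h2⟩ := hmemA m y hy
    have hne : x₀ ≠ y := by
      intro hc
      exact h2 (by simp only [hd']; rw [← hc])
    have := dyadicDist_eq_zpow hx₀ hy0 hne (j0 := -m) h1.symm (fun hc => h2 hc.symm)
    rw [neg_neg] at this
    exact ⟨hy0, this⟩
  have hKA : ∀ m : ℤ, ∀ y ∈ A m, K x₀ y = k m := by
    intro m y hy
    exact hk m x₀ y hx₀ (hdist m y hy).1 (hdist m y hy).2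
  have hne : ∀ m : ℤ, (A m).Nonempty := by
    intro m
    rcases hcases m with h | h
    · refine ⟨((2 * d m + 1 : ℕ) : ℝ) * 2^(-(-m+1)), ?_, ?_⟩
      · rw [Set.mem_Ico, hu m]
        push_cast
        constructor <;> nlinarith [hupos m]
      · intro hc
        have hy0 : (0:ℝ) ≤ ((2 * d m + 1 : ℕ) : ℝ) * 2^(-(-m+1)) := by positivity
        have := (mem_Ico_iff_dk hy0 (-m+1) (d' m)).1 hc
        rw [h] at this
        have h2 : dk (-m+1) (((2 * d m + 1 : ℕ) : ℝ) * 2^(-(-m+1))) = 2 * d m + 1 := by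
          apply (mem_Ico_iff_dk hy0 (-m+1) _).1
          rw [Set.mem_Ico]
          constructor <;> push_cast <;> nlinarith [hupos m]
        omega
    · refine ⟨((2 * d m : ℕ) : ℝ) * 2^(-(-m+1)), ?_, ?_⟩
      · rw [Set.mem_Ico, hu m]
        push_cast
        constructor <;> nlinarith [hupos m]
      · intro hc
        have hy0 : (0:ℝ) ≤ ((2 * d m : ℕ) : ℝ) * 2^(-(-m+1)) := by positivity
        have := (mem_Ico_iff_dk hy0 (-m+1) (d' m)).1 hc
        rw [h] at this
        have h2 : dk (-m+1) (((2 * d m : ℕ) : ℝ) * 2^(-(-m+1))) = 2 * d m := by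
          apply (mem_Ico_iff_dk hy0 (-m+1) _).1
          rw [Set.mem_Ico]
          constructor <;> push_cast <;> nlinarith [hupos m]
        omega
  have hk0 : ∀ m : ℤ, 0 ≤ k m := by
    intro m
    obtain ⟨y, hy⟩ := hne m
    rw [← hKA m y hy]
    exact hK0 x₀ y hx₀ (hdist m y hy).1
  refine ⟨hk0, ?_⟩
  have hdisj : Pairwise (Function.onFun Disjoint A) := by
    intro m m' hmm'
    rw [Function.onFun, Set.disjoint_left]
    intro y hym hym'
    apply hmm'
    have h1 := (hdist m y hym).2
    have h2 := (hdist m' y hym').2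
    rw [h1] at h2
    by_contra hne'
    rcases lt_or_gt_of_ne hne' with h | h
    · exact absurd h2 (ne_of_lt (zpow_lt_zpow_right₀ (by norm_num : (1:ℝ) < 2) h))
    · exact absurd h2.symm (ne_of_lt (zpow_lt_zpow_right₀ (by norm_num : (1:ℝ) < 2) h))
  have hmeas : ∀ m : ℤ, MeasurableSet (A m) := fun m =>
    measurableSet_Ico.diff measurableSet_Ico
  have hvol : ∀ m : ℤ, volume (A m) = ENNReal.ofReal (2^(-(-m+1))) := by
    intro m
    rw [hA]
    simp only
    rw [measure_diff (hsub m) measurableSet_Ico.nullMeasurableSet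
      (by rw [Real.volume_Ico]; exact ENNReal.ofReal_ne_top),
      Real.volume_Ico, Real.volume_Ico]
    rw [show ((d m : ℝ)+1) * 2^(-(-m)) - (d m : ℝ) * 2^(-(-m)) = 2^(-(-m)) by ring,
      show ((d' m : ℝ)+1) * 2^(-(-m+1)) - (d' m : ℝ) * 2^(-(-m+1)) = 2^(-(-m+1)) by ring,
      hu m, ← ENNReal.ofReal_sub _ (le_of_lt (hupos m))]
    congr 1
    ring
  have hInt : IntegrableOn (fun y => K x₀ y) (Set.Ici (0:ℝ)) := by
    by_contra hc
    rw [integral_undef hc] at hKnorm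
    norm_num at hKnorm
  have hfin : (∫⁻ y in Set.Ici (0:ℝ), ENNReal.ofReal (K x₀ y)) < ⊤ := by
    apply lt_of_le_of_lt _ hInt.2
    apply lintegral_mono
    intro a
    exact Real.ofReal_le_enorm _
  have hchain : (∑' m : ℤ, ENNReal.ofReal (k m) * volume (A m)) ≠ ⊤ := by
    have heq : ∀ m : ℤ, ENNReal.ofReal (k m) * volume (A m)
        = ∫⁻ y in A m, ENNReal.ofReal (K x₀ y) := by
      intro m
      rw [setLIntegral_congr_fun (hmeas m)
        (fun y hy => by rw [hKA m y hy]),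
        setLIntegral_const, mul_comm]
    have hle : (∑' m : ℤ, ENNReal.ofReal (k m) * volume (A m))
        ≤ ∫⁻ y in Set.Ici (0:ℝ), ENNReal.ofReal (K x₀ y) := by
      rw [tsum_congr heq, ← lintegral_iUnion hmeas hdisj]
      apply lintegral_mono_set
      apply Set.iUnion_subset
      intro m y hy
      exact (hdist m y hy).1
    exact ne_top_of_le_ne_top (ne_of_lt hfin) hle
  have hchain2 : (∑' m : ℤ, ENNReal.ofReal (k m * 2^(m-1 : ℤ))) ≠ ⊤ := by
    have heq2 : ∀ m : ℤ, ENNReal.ofReal (k m * 2^(m-1 : ℤ))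
        = ENNReal.ofReal (k m) * volume (A m) := by
      intro m
      rw [hvol m, ← ENNReal.ofReal_mul (hk0 m)]
      congr 2
      ring
    rw [tsum_congr heq2]
    exact hchain
  have hsummable : Summable (fun m : ℤ => k m * 2^(m-1 : ℤ)) := by
    have := ENNReal.summable_toReal hchain2
    apply this.congr
    intro m
    rw [ENNReal.toReal_ofReal (mul_nonneg (hk0 m) (le_of_lt (two_zpow_pos _)))]
  apply (hsummable.mul_right 2).congr
  intro m
  rw [zpow_sub_one₀ (by norm_num : (2:ℝ) ≠ 0)]
  ring

end main

/-- Corollary 1: for `K ∈ 𝒦` with eigenvalues `λ(h) = Λ_{j(h)}`, the Haar series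
`Σ_{h∈ℋ} λ(h) h(x) h(y)` converges absolutely and represents `K` at every pair
`x ≠ y` of points of `ℝ⁺`. -/
theorem kernel_haar_representation (K : ℝ → ℝ → ℝ) (k : ℤ → ℝ)
    (hK0 : ∀ x y : ℝ, 0 ≤ x → 0 ≤ y → 0 ≤ K x y)
    (hKdist : ∀ x y x' y' : ℝ, 0 ≤ x → 0 ≤ y → 0 ≤ x' → 0 ≤ y' →
      dyadicDist x y = dyadicDist x' y' → K x y = K x' y')
    (x₀ : ℝ) (hx₀ : 0 ≤ x₀)
    (hKnorm : (∫ y in Set.Ici (0:ℝ), K x₀ y) = 1)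
    (hk : ∀ (j : ℤ) (x y : ℝ), 0 ≤ x → 0 ≤ y → dyadicDist x y = (2:ℝ) ^ j → K x y = k j)
    (x y : ℝ) (hx : 0 ≤ x) (hy : 0 ≤ y) (hxy : x ≠ y) :
    Summable (fun p : ℤ × ℕ => |LambdaOf k p.1 * haarFn p.1 p.2 x * haarFn p.1 p.2 y|) ∧
      K x y = ∑' p : ℤ × ℕ, LambdaOf k p.1 * haarFn p.1 p.2 x * haarFn p.1 p.2 y := by
  classical
  obtain ⟨hk0, hsum⟩ := k_props hK0 hx₀ hKnorm hk
  obtain ⟨j0, hP, hnP, hmax⟩ := exists_j0 hx hy hxy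
  set Sf := ∑' m : ℤ, (2:ℝ)^m * k m with hSf
  set f : ℤ × ℕ → ℝ := fun p => LambdaOf k p.1 * haarFn p.1 p.2 x * haarFn p.1 p.2 y with hf
  set G : ℤ → ℝ := fun j => f (j, dk j x) with hG
  have hGval_lt : ∀ j : ℤ, j < j0 → G j = 2^j * LambdaOf k j := by
    intro j hj
    have hP1 : dk (j+1) x = dk (j+1) y := dk_anti hP (by omega)
    show LambdaOf k j * haarFn j (dk j x) x * haarFn j (dk j x) y = _
    rw [mul_assoc, haar_prod_same hx hy hP1]; ring
  have hGj0 : G j0 = -(2^(j0:ℤ) * LambdaOf k j0) := by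
    show LambdaOf k j0 * haarFn j0 (dk j0 x) x * haarFn j0 (dk j0 x) y = _
    rw [mul_assoc, haar_prod_opp hx hy hP hnP]; ring
  have hGgt : ∀ j : ℤ, j0 < j → G j = 0 := by
    intro j hj
    have hdkne : dk j y ≠ dk j x := by
      intro hc
      exact hnP (dk_anti hc.symm (by omega))
    show LambdaOf k j * haarFn j (dk j x) x * haarFn j (dk j x) y = 0
    rw [mul_assoc, haar_eq_zero hy hdkne]; ring
  have habsG : ∀ j : ℤ, |G j| ≤ (if j ≤ j0 then 2^j * Sf else 0) := by
    intro j
    rcases lt_trichotomy j j0 with h | h | h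
    · rw [hGval_lt j h, if_pos h.le]; exact zpow_Lambda_abs_le hk0 hsum j
    · subst h; rw [hGj0, if_pos le_rfl, abs_neg]; exact zpow_Lambda_abs_le hk0 hsum j
    · rw [hGgt j h, if_neg (by omega)]; simp
  have hBsummable : Summable (fun j : ℤ => (if j ≤ j0 then (2:ℝ)^j * Sf else 0)) := by
    have hinj : Function.Injective (fun n : ℕ => j0 - (n:ℤ)) := by
      intro a b h; simp only at h; omega
    rw [← hinj.summable_iff]
    · apply Summable.congr (((summable_geometric_of_lt_one (r := (1:ℝ)/2) (by norm_num)
        (by norm_num)).mul_left ((2:ℝ)^j0 * Sf)))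
      intro n
      simp only [Function.comp_apply]
      rw [if_pos (by omega)]
      rw [zpow_sub₀ (by norm_num : (2:ℝ) ≠ 0), zpow_natCast]
      field_simp
      rw [mul_assoc, ← mul_pow]; norm_num
    · intro j hj
      rw [if_neg]
      intro hc
      exact hj ⟨(j0 - j).toNat, by simp; omega⟩
  have hGabs : Summable (fun j : ℤ => |G j|) :=
    Summable.of_nonneg_of_le (fun j => abs_nonneg _) habsG hBsummable
  have hGsummable : Summable G := hGabs.of_abs
  have he : Function.Injective (fun j : ℤ => ((j, dk j x) : ℤ × ℕ)) := by
    intro a b h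
    exact congrArg Prod.fst h
  have hvanish : ∀ p : ℤ × ℕ, p ∉ Set.range (fun j : ℤ => ((j, dk j x) : ℤ × ℕ)) → f p = 0 := by
    intro p hp
    have hne : dk p.1 x ≠ p.2 := by
      intro hc
      exact hp ⟨p.1, Prod.ext rfl hc⟩
    show LambdaOf k p.1 * haarFn p.1 p.2 x * haarFn p.1 p.2 y = 0
    rw [mul_assoc, haar_eq_zero hx hne]; ring
  have hvanish_abs : ∀ p : ℤ × ℕ, p ∉ Set.range (fun j : ℤ => ((j, dk j x) : ℤ × ℕ)) →
      |f p| = 0 := fun p hp => by rw [hvanish p hp, abs_zero]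
  constructor
  · exact (he.summable_iff hvanish_abs).1 hGabs
  · -- value computation
    have hfsummable : Summable f := (he.summable_iff hvanish).1 hGsummable
    have htsum1 : (∑' p : ℤ × ℕ, f p) = ∑' j : ℤ, G j := by
      refine (he.tsum_eq ?_).symm
      intro p hp
      by_contra hc
      exact (Function.mem_support.1 hp) (hvanish p hc)
    set H : ℤ → ℝ := fun j => if j < j0 then G j else 0 with hH
    set E : ℤ → ℝ := fun j => if j = j0 then G j0 else 0 with hE
    have hGHE : ∀ j : ℤ, G j = H j + E j := by
      intro j
      rcases lt_trichotomy j j0 with h | h | h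
      · rw [hH, hE]; simp only [if_pos h, if_neg (ne_of_lt h), add_zero]
      · subst h; rw [hH, hE]; simp only [lt_irrefl, if_neg, if_pos rfl, zero_add]
        simp
      · have hj1 : ¬ j < j0 := by omega
        have hj2 : ¬ j = j0 := by omega
        simp only [hH, hE, if_neg hj1, if_neg hj2, hGgt j h, add_zero]
    have hEsummable : Summable E := (hasSum_ite_eq j0 (G j0)).summable
    have hHsummable : Summable H :=
      (hGsummable.sub hEsummable).congr (fun j => by rw [hGHE j]; ring)
    have htsumE : (∑' j : ℤ, E j) = G j0 := tsum_ite_eq j0 (fun _ => G j0)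
    have htsumH : (∑' j : ℤ, H j) = Fof k j0 := by
      have hinj2 : Function.Injective (fun n : ℕ => j0 - 1 - (n:ℤ)) := by
        intro a b h; simp only at h; omega
      have hsupp : Function.support H ⊆ Set.range (fun n : ℕ => j0 - 1 - (n:ℤ)) := by
        intro j hj
        have hjlt : j < j0 := by
          by_contra hc
          exact (Function.mem_support.1 hj) (by rw [hH]; simp only [if_neg hc])
        exact ⟨(j0 - 1 - j).toNat, by simp; omega⟩
      rw [← hinj2.tsum_eq hsupp]
      have hterm : ∀ n : ℕ, H (j0 - 1 - (n:ℤ)) = 2^(j0-1-(n:ℤ)) * LambdaOf k (j0-1-(n:ℤ)) := by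
        intro n
        rw [hH]
        simp only [if_pos (show j0 - 1 - (n:ℤ) < j0 by omega)]
        exact hGval_lt _ (by omega)
      rw [tsum_congr hterm]
      exact (hasSum_partial hk0 hsum j0).tsum_eq
    have htotal : (∑' p : ℤ × ℕ, f p) = Fof k j0 + G j0 := by
      rw [htsum1, tsum_congr hGHE, Summable.tsum_add hHsummable hEsummable, htsumH, htsumE]
    have hdd : dyadicDist x y = 2^(-j0 : ℤ) := dyadicDist_eq_zpow hx hy hxy hP hnP
    have hKxy : K x y = k (-j0) := hk (-j0) x y hx hy hdd
    rw [hKxy, htotal, hGj0, Fof, Lambda_formula hsum j0]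
    have e1 : (2:ℝ)^(j0:ℤ) * 2^(-j0-1 : ℤ) = 1/2 := by
      rw [zpow_mul_zpow, show (j0 + (-j0-1) : ℤ) = -1 by ring]; norm_num
    have e2 : (2:ℝ) * 2^(j0-1:ℤ) = 2^(j0:ℤ) := by
      rw [zpow_sub_one₀ (by norm_num : (2:ℝ) ≠ 0)]; ring
    rw [← e2] at e1 ⊢
    linear_combination (-(k (-j0))) * e1
end

section
/- Let t > 0 and let K ∈ 𝒦 be 1-stable with parameter (2/3)·t, i.e. 4^m k_m → (2/3)·t as m → +∞, where k_m are the level values of K. Then for every fixed j ∈ ℤ, the j-th scale eigenvalue of the kernel M^i (the 2^i-fold iteration of the 2^i-mollification of K), namely λ^{2^i}_{j−i} = [ (1/2)( Σ_{l < i−j} k_l 2^l − k_{i−j} 2^{i−j} ) ]^{2^i}, converges to e^{-t·2^j} as i → +∞. -/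
open MeasureTheory Set Filter
open scoped ENNReal

lemma myfloor_div (a : ℝ) (n : ℤ) (hn : 0 < n) : ⌊a / (n:ℝ)⌋ = ⌊a⌋ / n := by
  have hn' : (0:ℝ) < n := by exact_mod_cast hn
  have hde := Int.mul_ediv_add_emod ⌊a⌋ n
  have hr0 := Int.emod_nonneg ⌊a⌋ hn.ne'
  have hrn := Int.emod_lt_of_pos ⌊a⌋ hn
  have h1 : n * (⌊a⌋ / n) ≤ ⌊a⌋ := by omega
  have h2 : ⌊a⌋ + 1 ≤ n * (⌊a⌋ / n + 1) := by
    have : n * (⌊a⌋ / n + 1) = n * (⌊a⌋ / n) + n := by ring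
    omega
  rw [Int.floor_eq_iff]
  constructor
  · rw [le_div_iff₀ hn']
    have : ((n * (⌊a⌋ / n) : ℤ) : ℝ) ≤ (⌊a⌋:ℝ) := by exact_mod_cast h1
    push_cast at this ⊢
    nlinarith [Int.floor_le a]
  · rw [div_lt_iff₀ hn']
    have : ((⌊a⌋ + 1 : ℤ) : ℝ) ≤ ((n * (⌊a⌋ / n + 1) : ℤ) : ℝ) := by exact_mod_cast h2
    push_cast at this ⊢
    nlinarith [Int.lt_floor_add_one a]

lemma mem_dyIco_iff (x : ℝ) (j m : ℤ) :
    x ∈ Set.Ico ((m:ℝ) * (2:ℝ)^(-j)) (((m:ℝ)+1) * (2:ℝ)^(-j)) ↔ ⌊x * (2:ℝ)^j⌋ = m := by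
  have h2 : (0:ℝ) < (2:ℝ)^j := by positivity
  rw [Int.floor_eq_iff]
  constructor
  · rintro ⟨ha, hb⟩
    constructor
    · calc (m:ℝ) = (m * (2:ℝ)^(-j)) * (2:ℝ)^j := by
            rw [mul_assoc, ← zpow_add₀ (two_ne_zero), neg_add_cancel, zpow_zero, mul_one]
        _ ≤ x * (2:ℝ)^j := by exact mul_le_mul_of_nonneg_right ha h2.le
    · calc x * (2:ℝ)^j < (((m:ℝ)+1) * (2:ℝ)^(-j)) * (2:ℝ)^j :=
            mul_lt_mul_of_pos_right hb h2
        _ = (m:ℝ) + 1 := by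
            rw [mul_assoc, ← zpow_add₀ (two_ne_zero), neg_add_cancel, zpow_zero, mul_one]
  · rintro ⟨ha, hb⟩
    have h2' : (0:ℝ) < (2:ℝ)^(-j) := by positivity
    have key : ∀ c : ℝ, c * (2:ℝ)^(-j) * (2:ℝ)^j = c := fun c => by
      rw [mul_assoc, ← zpow_add₀ (two_ne_zero), neg_add_cancel, zpow_zero, mul_one]
    have hxe : x * (2:ℝ)^j * (2:ℝ)^(-j) = x := by
      rw [mul_assoc, ← zpow_add₀ (two_ne_zero), add_neg_cancel, zpow_zero, mul_one]
    constructor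
    · have := mul_le_mul_of_nonneg_right ha h2'.le
      rwa [hxe] at this
    · have := mul_lt_mul_of_pos_right hb h2'
      rwa [hxe] at this

lemma floor_level_mono {x y : ℝ} {i j : ℤ} (hij : i ≤ j)
    (h : ⌊x * (2:ℝ)^j⌋ = ⌊y * (2:ℝ)^j⌋) : ⌊x * (2:ℝ)^i⌋ = ⌊y * (2:ℝ)^i⌋ := by
  have hn : (0:ℤ) < (2:ℤ)^((j - i).toNat) := by positivity
  have hC : (((2:ℤ)^((j-i).toNat) : ℤ) : ℝ) = (2:ℝ)^(j-i) := by
    rw [show j - i = ((j-i).toNat : ℤ) by omega, zpow_natCast]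
    norm_cast
  have key : ∀ z : ℝ, z * (2:ℝ)^i = z * (2:ℝ)^j / (((2:ℤ)^((j-i).toNat) : ℤ) : ℝ) := by
    intro z
    rw [hC, eq_div_iff (by positivity), mul_assoc, ← zpow_add₀ (two_ne_zero (α := ℝ))]
    congr 1
    ring
  rw [key x, key y, myfloor_div _ _ hn, myfloor_div _ _ hn, h]

lemma dyadic_set_char (x y : ℝ) (hx : 0 ≤ x) (j : ℤ) :
    (∃ k : ℕ, x ∈ Set.Ico ((k : ℝ) * (2:ℝ) ^ (-j)) (((k : ℝ) + 1) * (2:ℝ) ^ (-j)) ∧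
      y ∈ Set.Ico ((k : ℝ) * (2:ℝ) ^ (-j)) (((k : ℝ) + 1) * (2:ℝ) ^ (-j))) ↔
    ⌊x * (2:ℝ)^j⌋ = ⌊y * (2:ℝ)^j⌋ := by
  constructor
  · rintro ⟨kk, h1, h2⟩
    have e1 := (mem_dyIco_iff x j (kk:ℤ)).mp (by exact_mod_cast h1)
    have e2 := (mem_dyIco_iff y j (kk:ℤ)).mp (by exact_mod_cast h2)
    rw [e1, e2]
  · intro h
    have hnn : 0 ≤ ⌊x * (2:ℝ)^j⌋ := Int.floor_nonneg.mpr (by positivity)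
    have hc : ((⌊x * (2:ℝ)^j⌋.toNat : ℕ) : ℝ) = ((⌊x * (2:ℝ)^j⌋ : ℤ) : ℝ) := by
      exact_mod_cast congrArg (fun z : ℤ => (z : ℝ)) (Int.toNat_of_nonneg hnn)
    refine ⟨⌊x * (2:ℝ)^j⌋.toNat, ?_, ?_⟩
    · rw [hc]
      exact (mem_dyIco_iff x j ⌊x * (2:ℝ)^j⌋).mpr rfl
    · rw [hc]
      exact (mem_dyIco_iff y j ⌊x * (2:ℝ)^j⌋).mpr h.symm

lemma dyadicDist_eq_of (x y : ℝ) (hx : 0 ≤ x) (hy : 0 ≤ y) (hxy : x ≠ y) (J : ℤ)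
    (h1 : ⌊x * (2:ℝ)^J⌋ = ⌊y * (2:ℝ)^J⌋) (h2 : ⌊x * (2:ℝ)^(J+1)⌋ ≠ ⌊y * (2:ℝ)^(J+1)⌋) :
    dyadicDist x y = (2:ℝ)^(-J) := by
  rw [dyadicDist, if_neg hxy]
  have hS : {r : ℝ | ∃ (j : ℤ) (k : ℕ), r = (2:ℝ) ^ (-j) ∧
      x ∈ Set.Ico ((k : ℝ) * (2:ℝ) ^ (-j)) (((k : ℝ) + 1) * (2:ℝ) ^ (-j)) ∧
      y ∈ Set.Ico ((k : ℝ) * (2:ℝ) ^ (-j)) (((k : ℝ) + 1) * (2:ℝ) ^ (-j))}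
      = {r : ℝ | ∃ j : ℤ, r = (2:ℝ)^(-j) ∧ ⌊x * (2:ℝ)^j⌋ = ⌊y * (2:ℝ)^j⌋} := by
    ext r
    simp only [Set.mem_setOf_eq]
    constructor
    · rintro ⟨j, kk, hr, hm1, hm2⟩
      exact ⟨j, hr, (dyadic_set_char x y hx j).mp ⟨kk, hm1, hm2⟩⟩
    · rintro ⟨j, hr, hsl⟩
      obtain ⟨kk, hm1, hm2⟩ := (dyadic_set_char x y hx j).mpr hsl
      exact ⟨j, kk, hr, hm1, hm2⟩
  rw [hS]
  apply IsLeast.csInf_eq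
  constructor
  · exact ⟨J, rfl, h1⟩
  · rintro r ⟨i, hr, hsl⟩
    have hiJ : i ≤ J := by
      by_contra hc
      exact h2 (floor_level_mono (by omega) hsl)
    rw [hr]
    exact zpow_le_zpow_right₀ one_le_two (by omega)

noncomputable def Iset (x₀ : ℝ) (j : ℤ) : Set ℝ :=
  Set.Ico ((⌊x₀ * (2:ℝ)^j⌋ : ℝ) * (2:ℝ)^(-j)) (((⌊x₀ * (2:ℝ)^j⌋ : ℝ) + 1) * (2:ℝ)^(-j))

noncomputable def Aset (x₀ : ℝ) (j : ℤ) : Set ℝ := Iset x₀ j \ Iset x₀ (j+1)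

lemma mem_Iset_iff {x₀ y : ℝ} {j : ℤ} : y ∈ Iset x₀ j ↔ ⌊y * (2:ℝ)^j⌋ = ⌊x₀ * (2:ℝ)^j⌋ :=
  mem_dyIco_iff y j _

lemma self_mem_Iset (x₀ : ℝ) (j : ℤ) : x₀ ∈ Iset x₀ j := mem_Iset_iff.mpr rfl

lemma Iset_antitone (x₀ : ℝ) {i j : ℤ} (hij : i ≤ j) : Iset x₀ j ⊆ Iset x₀ i := by
  intro y hy
  exact mem_Iset_iff.mpr (floor_level_mono hij (mem_Iset_iff.mp hy))

lemma Iset_measurable (x₀ : ℝ) (j : ℤ) : MeasurableSet (Iset x₀ j) := measurableSet_Ico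

lemma Iset_volume (x₀ : ℝ) (j : ℤ) : volume (Iset x₀ j) = ENNReal.ofReal ((2:ℝ)^(-j)) := by
  rw [Iset, Real.volume_Ico]
  congr 1
  ring

lemma Aset_volume (x₀ : ℝ) (j : ℤ) : volume (Aset x₀ j) = ENNReal.ofReal ((2:ℝ)^(-(j+1))) := by
  rw [Aset, measure_diff (Iset_antitone x₀ (by omega)) (Iset_measurable x₀ (j+1)).nullMeasurableSet
    (by rw [Iset_volume]; exact ENNReal.ofReal_ne_top), Iset_volume, Iset_volume,
    ← ENNReal.ofReal_sub _ (by positivity)]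
  congr 1
  have : (2:ℝ)^(-j) = 2 * (2:ℝ)^(-(j+1)) := by
    rw [show -j = 1 + -(j+1) by ring, zpow_add₀ (two_ne_zero (α := ℝ))]
    norm_num
  linarith

lemma Aset_subset_Ici {x₀ : ℝ} (hx₀ : 0 ≤ x₀) (j : ℤ) : Aset x₀ j ⊆ Set.Ici 0 := by
  intro y hy
  have h1 : (0:ℝ) ≤ (⌊x₀ * (2:ℝ)^j⌋ : ℝ) * (2:ℝ)^(-j) := by
    have : (0:ℤ) ≤ ⌊x₀ * (2:ℝ)^j⌋ := Int.floor_nonneg.mpr (by positivity)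
    have : (0:ℝ) ≤ (⌊x₀ * (2:ℝ)^j⌋ : ℝ) := by exact_mod_cast this
    positivity
  exact le_trans h1 hy.1.1

lemma Aset_dist {x₀ : ℝ} (hx₀ : 0 ≤ x₀) {j : ℤ} {y : ℝ} (hy : y ∈ Aset x₀ j) :
    dyadicDist x₀ y = (2:ℝ)^(-j) := by
  have hy0 : 0 ≤ y := Aset_subset_Ici hx₀ j hy
  have hne : x₀ ≠ y := by
    rintro rfl
    exact hy.2 (self_mem_Iset x₀ (j+1))
  exact dyadicDist_eq_of x₀ y hx₀ hy0 hne j (mem_Iset_iff.mp hy.1).symm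
    (fun h => hy.2 (mem_Iset_iff.mpr h.symm))

lemma Aset_disjoint_aux (x₀ : ℝ) {i j : ℤ} (h : i < j) : Disjoint (Aset x₀ i) (Aset x₀ j) :=
  Set.disjoint_left.mpr fun _ hyi hyj => hyi.2 (Iset_antitone x₀ (by omega) hyj.1)

lemma Aset_disjoint (x₀ : ℝ) : Pairwise (Function.onFun Disjoint (Aset x₀)) := by
  intro i j hij
  rcases hij.lt_or_gt with h | h
  · exact Aset_disjoint_aux x₀ h
  · exact (Aset_disjoint_aux x₀ h).symm

lemma Aset_cover {x₀ : ℝ} (hx₀ : 0 ≤ x₀) {y : ℝ} (hy : 0 ≤ y) (hne : y ≠ x₀) :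
    ∃ J : ℤ, y ∈ Aset x₀ J := by
  have hsub : ∀ {i j : ℤ}, i ≤ j → y ∈ Iset x₀ j → y ∈ Iset x₀ i := fun h hm =>
    Iset_antitone x₀ h hm
  -- nonempty
  have hne' : ∃ z : ℤ, y ∈ Iset x₀ z := by
    set M := max x₀ y with hM
    obtain ⟨n, hn⟩ := pow_unbounded_of_one_lt (M + 1) (one_lt_two (α := ℝ))
    refine ⟨-(n:ℤ), mem_Iset_iff.mpr ?_⟩
    have hpos : (0:ℝ) < (2:ℝ)^(n:ℕ) := by positivity
    have key : ∀ z : ℝ, 0 ≤ z → z ≤ M → ⌊z * (2:ℝ)^(-(n:ℤ))⌋ = 0 := by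
      intro z hz0 hzM
      rw [Int.floor_eq_iff]
      constructor
      · push_cast
        positivity
      · push_cast
        rw [zpow_neg, zpow_natCast]
        rw [mul_inv_lt_iff₀ hpos]
        nlinarith
    rw [key y hy (le_max_right _ _), key x₀ hx₀ (le_max_left _ _)]
  -- bounded above
  have hbdd : ∃ b : ℤ, ∀ z : ℤ, y ∈ Iset x₀ z → z ≤ b := by
    have habs : 0 < |x₀ - y| := abs_pos.mpr (sub_ne_zero.mpr (Ne.symm hne))
    obtain ⟨n, hn⟩ := pow_unbounded_of_one_lt (1 / |x₀ - y|) (one_lt_two (α := ℝ))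
    refine ⟨(n:ℤ), fun z hz => ?_⟩
    by_contra hc
    push_neg at hc
    have hz' : y ∈ Iset x₀ z := hz
    have hfl := mem_Iset_iff.mp hz'
    have h1 : |x₀ * (2:ℝ)^z - y * (2:ℝ)^z| < 1 := by
      have hx1 := Int.floor_le (x₀ * (2:ℝ)^z)
      have hx2 := Int.lt_floor_add_one (x₀ * (2:ℝ)^z)
      have hy1 := Int.floor_le (y * (2:ℝ)^z)
      have hy2 := Int.lt_floor_add_one (y * (2:ℝ)^z)
      rw [hfl] at hy1 hy2
      rw [abs_lt]
      constructor <;> linarith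
    have h2 : |x₀ - y| * (2:ℝ)^z < 1 := by
      rwa [← abs_of_pos (show (0:ℝ) < (2:ℝ)^z by positivity), ← abs_mul, sub_mul]
    have h3 : (2:ℝ)^(n:ℤ) < (2:ℝ)^z := by
      apply zpow_lt_zpow_right₀ (one_lt_two (α := ℝ))
      omega
    have h4 : (2:ℝ)^(n:ℤ) * |x₀ - y| < 1 := by
      calc (2:ℝ)^(n:ℤ) * |x₀ - y| < (2:ℝ)^z * |x₀ - y| :=
            mul_lt_mul_of_pos_right h3 habs
        _ < 1 := by rwa [mul_comm]
    rw [div_lt_iff₀ habs] at hn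
    rw [zpow_natCast] at h4
    linarith
  obtain ⟨b, hb⟩ := hbdd
  obtain ⟨J, hJ1, hJ2⟩ := Int.exists_greatest_of_bdd ⟨b, hb⟩ hne'
  refine ⟨J, hJ1, fun hmem => ?_⟩
  have := hJ2 (J+1) hmem
  omega

section Main
variable (K : ℝ → ℝ → ℝ) (k : ℤ → ℝ)

lemma k_nonneg (hK0 : ∀ x y : ℝ, 0 ≤ x → 0 ≤ y → 0 ≤ K x y)
    (hk : ∀ (j : ℤ) (x y : ℝ), 0 ≤ x → 0 ≤ y → dyadicDist x y = (2:ℝ) ^ j → K x y = k j)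
    (l : ℤ) : 0 ≤ k l := by
  have hy : (0:ℝ) ≤ (2:ℝ)^(l-1) := by positivity
  have hd : dyadicDist 0 ((2:ℝ)^(l-1)) = (2:ℝ)^l := by
    have := dyadicDist_eq_of 0 ((2:ℝ)^(l-1)) le_rfl hy
      (by positivity : (0:ℝ) < (2:ℝ)^(l-1)).ne (-l)
      (by
        rw [zero_mul, Int.floor_zero, ← zpow_add₀ (two_ne_zero (α := ℝ))]
        rw [show l - 1 + -l = -1 by ring]
        symm
        rw [Int.floor_eq_iff] <;> norm_num)
      (by
        rw [zero_mul, Int.floor_zero, ← zpow_add₀ (two_ne_zero (α := ℝ))]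
        rw [show l - 1 + (-l + 1) = 0 by ring]
        norm_num)
    rwa [neg_neg] at this
  rw [← hk l 0 ((2:ℝ)^(l-1)) le_rfl hy hd]
  exact hK0 _ _ le_rfl hy

lemma sum_eq_two (hK0 : ∀ x y : ℝ, 0 ≤ x → 0 ≤ y → 0 ≤ K x y)
    (x₀ : ℝ) (hx₀ : 0 ≤ x₀)
    (hKnorm : (∫ y in Set.Ici (0:ℝ), K x₀ y) = 1)
    (hk : ∀ (j : ℤ) (x y : ℝ), 0 ≤ x → 0 ≤ y → dyadicDist x y = (2:ℝ) ^ j → K x y = k j) :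
    Summable (fun l : ℤ => k l * (2:ℝ)^l) ∧ ∑' l : ℤ, k l * (2:ℝ)^l = 2 := by
  have hknn := k_nonneg K k hK0 hk
  -- step 1 : the lintegral is 1
  have hint : IntegrableOn (K x₀) (Set.Ici 0) volume := by
    by_contra hc
    rw [MeasureTheory.integral_undef hc] at hKnorm
    norm_num at hKnorm
  have hae0 : 0 ≤ᵐ[volume.restrict (Set.Ici (0:ℝ))] K x₀ := by
    rw [EventuallyLE, ae_restrict_iff' measurableSet_Ici]
    exact Eventually.of_forall fun y hy => hK0 x₀ y hx₀ hy
  have hlint : ∫⁻ y in Set.Ici (0:ℝ), ENNReal.ofReal (K x₀ y) = 1 := by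
    rw [← MeasureTheory.ofReal_integral_eq_lintegral_ofReal hint hae0, hKnorm,
      ENNReal.ofReal_one]
  -- step 2 : rewrite the integrand as a sum of indicators a.e.
  set F : ℝ → ℝ≥0∞ := fun y =>
    ∑' m : ℤ, (Aset x₀ m).indicator (fun _ => ENNReal.ofReal (k (-m))) y with hF
  have haeF : (fun y => ENNReal.ofReal (K x₀ y)) =ᵐ[volume.restrict (Set.Ici (0:ℝ))] F := by
    have h0 : ∀ y ∈ Set.Ici (0:ℝ), y ≠ x₀ → ENNReal.ofReal (K x₀ y) = F y := by
      intro y hy hne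
      obtain ⟨J, hJ⟩ := Aset_cover hx₀ hy hne
      have hone : F y = ENNReal.ofReal (k (-J)) := by
        have h1 : ∑' m : ℤ, (Aset x₀ m).indicator (fun _ => ENNReal.ofReal (k (-m))) y
            = (Aset x₀ J).indicator (fun _ => ENNReal.ofReal (k (-J))) y :=
          tsum_eq_single J (fun m hm => Set.indicator_of_notMem
            (fun hym => (Set.disjoint_left.mp (Aset_disjoint x₀ hm) hym) hJ) _)
        exact h1.trans (by rw [Set.indicator_of_mem hJ])
      rw [hone]
      congr 1
      exact hk (-J) x₀ y hx₀ hy (by rw [Aset_dist hx₀ hJ])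
    have hx : ∀ᵐ y ∂(volume : Measure ℝ), y ≠ x₀ := by
      rw [ae_iff]
      have : {a : ℝ | ¬ a ≠ x₀} = {x₀} := by ext a; simp
      rw [this]
      exact Real.volume_singleton
    rw [EventuallyEq, ae_restrict_iff' measurableSet_Ici]
    filter_upwards [hx] with y hyx hy using h0 y hy hyx
  -- step 3 : compute the lintegral of F
  have hFint : ∫⁻ y in Set.Ici (0:ℝ), F y
      = ∑' m : ℤ, ENNReal.ofReal (k (-m)) * ENNReal.ofReal ((2:ℝ)^(-(m+1))) := by
    have hmeas : ∀ m : ℤ, MeasurableSet (Aset x₀ m) :=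
      fun m => (Iset_measurable x₀ m).diff (Iset_measurable x₀ (m+1))
    simp only [hF]
    rw [lintegral_tsum (fun m => (measurable_const.indicator (hmeas m)).aemeasurable)]
    refine tsum_congr fun m => ?_
    rw [lintegral_indicator (hmeas m), setLIntegral_const]
    rw [Measure.restrict_apply (hmeas m),
      Set.inter_eq_self_of_subset_left (Aset_subset_Ici hx₀ m),
      Aset_volume]
  have hkey : ∑' m : ℤ, ENNReal.ofReal (k (-m) * (2:ℝ)^(-m-1)) = 1 := by
    rw [← hlint, lintegral_congr_ae haeF, hFint]
    refine tsum_congr fun m => ?_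
    rw [ENNReal.ofReal_mul (hknn (-m)), show -(m+1) = -m-1 by ring]
  have hkey2 : ∑' l : ℤ, ENNReal.ofReal (k l * (2:ℝ)^(l-1)) = 1 := by
    rw [← hkey, ← (Equiv.neg ℤ).tsum_eq (fun l : ℤ => ENNReal.ofReal (k l * (2:ℝ)^(l-1)))]
    rfl
  -- step 4 : back to the reals
  have hs1 : Summable (fun l : ℤ => k l * (2:ℝ)^(l-1)) := by
    have := ENNReal.summable_toReal (f := fun l : ℤ => ENNReal.ofReal (k l * (2:ℝ)^(l-1)))
      (by rw [hkey2]; exact ENNReal.one_ne_top)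
    refine this.congr fun l => ?_
    exact ENNReal.toReal_ofReal (mul_nonneg (hknn l) (by positivity))
  have hsum1 : ∑' l : ℤ, k l * (2:ℝ)^(l-1) = 1 := by
    have h := ENNReal.tsum_toReal_eq
      (f := fun l : ℤ => ENNReal.ofReal (k l * (2:ℝ)^(l-1))) (fun l => ENNReal.ofReal_ne_top)
    rw [hkey2] at h
    simp only [ENNReal.toReal_one] at h
    calc ∑' l : ℤ, k l * (2:ℝ)^(l-1)
        = ∑' l : ℤ, (ENNReal.ofReal (k l * (2:ℝ)^(l-1))).toReal :=
          tsum_congr fun l => (ENNReal.toReal_ofReal (mul_nonneg (hknn l) (by positivity))).symm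
      _ = 1 := h.symm
  have hrw : ∀ l : ℤ, k l * (2:ℝ)^l = 2 * (k l * (2:ℝ)^(l-1)) := by
    intro l
    rw [show l = 1 + (l-1) by ring, zpow_add₀ (two_ne_zero (α := ℝ))]
    ring_nf
  constructor
  · exact (hs1.mul_left 2).congr fun l => (hrw l).symm
  · calc ∑' l : ℤ, k l * (2:ℝ)^l = ∑' l : ℤ, 2 * (k l * (2:ℝ)^(l-1)) := tsum_congr hrw
      _ = 2 * ∑' l : ℤ, k l * (2:ℝ)^(l-1) := tsum_mul_left
      _ = 2 := by rw [hsum1]; norm_num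

/-- reindexing equiv for tails of ℤ -/
def tailEquiv (m : ℤ) : ℕ ≃ {l : ℤ // ¬ l < m} where
  toFun n := ⟨m + n, by omega⟩
  invFun l := (l.1 - m).toNat
  left_inv n := by simp
  right_inv l := by
    have := l.2
    ext
    simp only
    omega

lemma tail_tendsto (t : ℝ) (hs : Summable (fun l : ℤ => k l * (2:ℝ)^l))
    (hstab : Filter.Tendsto (fun m : ℤ => (4:ℝ) ^ m * k m) Filter.atTop (nhds (2 / 3 * t))) :
    Filter.Tendsto (fun m : ℤ => (2:ℝ)^m * ∑' l : {l : ℤ // ¬ l < m}, k l.1 * (2:ℝ)^l.1)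
      Filter.atTop (nhds (4/3 * t)) := by
  rw [Metric.tendsto_atTop]
  intro ε hε
  obtain ⟨M, hM⟩ := (Metric.tendsto_atTop.mp hstab) (ε/5) (by linarith)
  refine ⟨M, fun m hm => ?_⟩
  -- reindex the tail sum over ℕ
  have hrw : (2:ℝ)^m * ∑' l : {l : ℤ // ¬ l < m}, k l.1 * (2:ℝ)^l.1
      = ∑' n : ℕ, (2:ℝ)^m * (k (m + n) * (2:ℝ)^(m + (n:ℤ))) := by
    rw [← (tailEquiv m).tsum_eq (fun l : {l : ℤ // ¬ l < m} => k l.1 * (2:ℝ)^l.1),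
      ← tsum_mul_left]
    rfl
  set b : ℕ → ℝ := fun n => (2:ℝ)^m * (k (m + n) * (2:ℝ)^(m + (n:ℤ))) with hbdef
  set d : ℕ → ℝ := fun n => (2/3*t) * ((1/2:ℝ))^n with hddef
  have hb : ∀ n : ℕ, b n = ((4:ℝ)^(m + (n:ℤ)) * k (m + n)) * ((1/2:ℝ))^n := by
    intro n
    have h4 : (4:ℝ)^(m + (n:ℤ)) = (2:ℝ)^(2*(m + (n:ℤ))) := by
      rw [show (4:ℝ) = (2:ℝ)^(2:ℤ) by norm_num, ← zpow_mul]
    have h12 : ((1/2:ℝ))^n = (2:ℝ)^(-(n:ℤ)) := by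
      rw [one_div, inv_pow, ← zpow_natCast, ← zpow_neg]
    have e1 : b n = k (m + n) * (2:ℝ)^(m + (m + (n:ℤ))) := by
      rw [hbdef, zpow_add₀ (two_ne_zero (α := ℝ)) m (m + (n:ℤ))]
      ring
    rw [e1, h4, h12, show m + (m + (n:ℤ)) = 2*(m + (n:ℤ)) + -(n:ℤ) by ring,
      zpow_add₀ (two_ne_zero (α := ℝ))]
    ring
  -- summability
  have hinj : Function.Injective (fun n : ℕ => m + (n:ℤ)) := fun a b h => by
    simp only at h
    omega
  have hsb : Summable b := ((hs.comp_injective hinj).mul_left _)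
  have hsd : Summable d := summable_geometric_two.mul_left _
  have hdsum : ∑' n : ℕ, d n = 4/3*t := by
    rw [hddef, tsum_mul_left, tsum_geometric_two]
    ring
  rw [hrw, Real.dist_eq]
  have hgoal : (∑' n : ℕ, (2:ℝ)^m * (k (m + n) * (2:ℝ)^(m + (n:ℤ)))) = ∑' n : ℕ, b n := rfl
  rw [hgoal, ← hdsum, ← Summable.tsum_sub hsb hsd]
  have habs : ∀ n : ℕ, |b n - d n| ≤ (ε/5) * ((1/2:ℝ))^n := by
    intro n
    rw [hb n, hddef, ← sub_mul, abs_mul, abs_of_nonneg (by positivity : (0:ℝ) ≤ ((1/2:ℝ))^n)]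
    have := (hM (m + n) (by omega)).le
    rw [Real.dist_eq] at this
    exact mul_le_mul_of_nonneg_right this (by positivity)
  have hsabs : Summable (fun n : ℕ => |b n - d n|) := (hsb.sub hsd).abs
  have hnorm : |∑' n : ℕ, (b n - d n)| ≤ ∑' n : ℕ, |b n - d n| := by
    have h := norm_tsum_le_tsum_norm (f := fun n : ℕ => b n - d n)
      (by simpa [Real.norm_eq_abs] using hsabs)
    simpa [Real.norm_eq_abs] using h
  have h2 : ∑' n : ℕ, |b n - d n| ≤ ∑' n : ℕ, (ε/5) * ((1/2:ℝ))^n :=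
    Summable.tsum_le_tsum habs hsabs (summable_geometric_two.mul_left _)
  have h3 : ∑' n : ℕ, (ε/5) * ((1/2:ℝ))^n = (ε/5) * 2 := by
    rw [tsum_mul_left, tsum_geometric_two]
  linarith

end Main

noncomputable def Gfun (u : ℝ) : ℝ := if u = 0 then 1 else Real.log (1+u) / u

lemma Gfun_tendsto : Filter.Tendsto Gfun (nhds 0) (nhds 1) := by
  have hlog : HasDerivAt Real.log 1 1 := by simpa using Real.hasDerivAt_log one_ne_zero
  rw [hasDerivAt_iff_tendsto_slope] at hlog
  have hcomp : Filter.Tendsto (fun u : ℝ => (1:ℝ)+u) (nhdsWithin (0:ℝ) {(0:ℝ)}ᶜ)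
      (nhdsWithin (1:ℝ) {(1:ℝ)}ᶜ) := by
    rw [tendsto_nhdsWithin_iff]
    constructor
    · have h : Filter.Tendsto (fun u : ℝ => (1:ℝ)+u) (nhds 0) (nhds 1) := by
        exact (continuous_const.add continuous_id).tendsto' (0:ℝ) 1 (by simp)
      exact h.mono_left nhdsWithin_le_nhds
    · filter_upwards [self_mem_nhdsWithin] with u hu
      simp only [Set.mem_compl_iff, Set.mem_singleton_iff] at hu ⊢
      intro h
      exact hu (by linarith)
  have h2 := hlog.comp hcomp
  have h3 : Filter.Tendsto Gfun (nhdsWithin (0:ℝ) {(0:ℝ)}ᶜ) (nhds 1) := by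
    refine h2.congr' ?_
    filter_upwards [self_mem_nhdsWithin] with u hu
    simp only [Set.mem_compl_iff, Set.mem_singleton_iff] at hu
    simp only [Function.comp_apply, slope, Real.log_one, vsub_eq_sub, Gfun, if_neg hu]
    rw [add_sub_cancel_left]
    simp [div_eq_inv_mul]
  rw [← nhdsNE_sup_pure (0:ℝ), tendsto_sup]
  refine ⟨h3, ?_⟩
  have : Gfun 0 = 1 := if_pos rfl
  rw [← this]
  exact tendsto_pure_nhds Gfun 0

lemma pow_tendsto_exp (a : ℕ → ℝ) (c : ℝ)
    (hz : Filter.Tendsto (fun i : ℕ => (2:ℝ)^i * (1 - a i)) Filter.atTop (nhds c)) :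
    Filter.Tendsto (fun i : ℕ => a i ^ (2^i : ℕ)) Filter.atTop (nhds (Real.exp (-c))) := by
  have hcancel : ∀ i : ℕ, (2:ℝ)^i * (1/2:ℝ)^i = 1 := fun i => by
    rw [← mul_pow]
    norm_num
  have hpow : Filter.Tendsto (fun i : ℕ => ((1:ℝ)/2)^i) Filter.atTop (nhds 0) :=
    tendsto_pow_atTop_nhds_zero_of_lt_one (by norm_num) (by norm_num)
  have ha1 : Filter.Tendsto a Filter.atTop (nhds 1) := by
    have h0 : Filter.Tendsto (fun i : ℕ => ((2:ℝ)^i*(1-a i)) * (1/2:ℝ)^i)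
        Filter.atTop (nhds (c * 0)) := hz.mul hpow
    rw [mul_zero] at h0
    have h1 : Filter.Tendsto (fun i : ℕ => 1 - a i) Filter.atTop (nhds 0) := by
      refine h0.congr fun i => ?_
      calc ((2:ℝ)^i*(1-a i)) * (1/2:ℝ)^i = ((2:ℝ)^i*(1/2:ℝ)^i)*(1-a i) := by ring
        _ = 1 - a i := by rw [hcancel i, one_mul]
    have := tendsto_const_nhds (x := (1:ℝ)) (f := Filter.atTop (α := ℕ)) |>.sub h1
    simpa using this
  have hu : Filter.Tendsto (fun i : ℕ => a i - 1) Filter.atTop (nhds 0) := by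
    simpa using ha1.sub_const 1
  have hapos : ∀ᶠ i : ℕ in Filter.atTop, 0 < a i :=
    ha1.eventually (eventually_gt_nhds (by norm_num))
  have hzneg : Filter.Tendsto (fun i : ℕ => (2:ℝ)^i * (a i - 1)) Filter.atTop (nhds (-c)) := by
    have := hz.neg
    refine this.congr fun i => ?_
    ring
  have hGlim : Filter.Tendsto (fun i : ℕ => Gfun (a i - 1)) Filter.atTop (nhds 1) :=
    Gfun_tendsto.comp hu
  have hlogpart : Filter.Tendsto (fun i : ℕ => (2:ℝ)^i * Real.log (a i))
      Filter.atTop (nhds (-c)) := by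
    have hmul := hzneg.mul hGlim
    rw [mul_one] at hmul
    refine hmul.congr' ?_
    filter_upwards [hapos] with i hai
    by_cases hu0 : a i - 1 = 0
    · have hai1 : a i = 1 := by linarith
      simp [hu0, hai1, Gfun]
    · rw [Gfun, if_neg hu0, show (1:ℝ) + (a i - 1) = a i by ring]
      field_simp
  have hexp := (Real.continuous_exp.tendsto _).comp hlogpart
  refine hexp.congr' ?_
  filter_upwards [hapos] with i hai
  rw [Function.comp_apply, show (2:ℝ)^i = ((2^i : ℕ) : ℝ) by push_cast; ring,
    Real.exp_nat_mul, Real.exp_log hai]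

/-- Theorem 5 (a): if `K ∈ 𝒦` is `1`-stable with parameter `(2/3)t`, i.e. its level values
satisfy `4^m k_m → (2/3)t`, then for every `j ∈ ℤ` the `j`-th scale eigenvalue of `M^i`,
`λ^{2^i}_{j-i} = [(1/2)(Σ_{l<i-j} k_l 2^l - k_{i-j} 2^{i-j})]^{2^i}`, converges to
`e^{-t·2^j}` as `i → +∞`. -/
theorem eigenvalues_converge (t : ℝ) (ht : 0 < t) (K : ℝ → ℝ → ℝ) (k : ℤ → ℝ)
    (hK0 : ∀ x y : ℝ, 0 ≤ x → 0 ≤ y → 0 ≤ K x y)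
    (hKdist : ∀ x y x' y' : ℝ, 0 ≤ x → 0 ≤ y → 0 ≤ x' → 0 ≤ y' →
      dyadicDist x y = dyadicDist x' y' → K x y = K x' y')
    (x₀ : ℝ) (hx₀ : 0 ≤ x₀)
    (hKnorm : (∫ y in Set.Ici (0:ℝ), K x₀ y) = 1)
    (hk : ∀ (j : ℤ) (x y : ℝ), 0 ≤ x → 0 ≤ y → dyadicDist x y = (2:ℝ) ^ j → K x y = k j)
    (hstab : Filter.Tendsto (fun m : ℤ => (4:ℝ) ^ m * k m) Filter.atTop (nhds (2 / 3 * t)))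
    (j : ℤ) :
    Filter.Tendsto
      (fun i : ℕ =>
        ((1 / 2 : ℝ) * ((∑' l : {l : ℤ // l < (i : ℤ) - j}, k l.1 * (2:ℝ) ^ l.1) -
          k ((i : ℤ) - j) * (2:ℝ) ^ ((i : ℤ) - j))) ^ (2 ^ i))
      Filter.atTop (nhds (Real.exp (-t * (2:ℝ) ^ j))) := by
  obtain ⟨hs, hsum2⟩ := sum_eq_two K k hK0 x₀ hx₀ hKnorm hk
  set T : ℤ → ℝ := fun m => ∑' l : {l : ℤ // ¬ l < m}, k l.1 * (2:ℝ)^l.1 with hT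
  have hsplit : ∀ m : ℤ, (∑' l : {l : ℤ // l < m}, k l.1 * (2:ℝ)^l.1) = 2 - T m := by
    intro m
    have h2 : (∑' l : {l : ℤ // l < m}, k l.1 * (2:ℝ)^l.1)
        + (∑' l : {l : ℤ // ¬ l < m}, k l.1 * (2:ℝ)^l.1) = 2 := by
      have h := Summable.tsum_add_tsum_compl (f := fun l : ℤ => k l * (2:ℝ)^l)
        (s := {l : ℤ | l < m}) (hs.subtype _) (hs.subtype _)
      rw [hsum2] at h
      exact h
    rw [hT]
    linarith
  -- the rescaled deficit converges to t
  have hphi : Filter.Tendsto (fun m : ℤ => (1/2:ℝ) * ((2:ℝ)^m * T m + (4:ℝ)^m * k m))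
      Filter.atTop (nhds t) := by
    have h1 := tail_tendsto k t hs hstab
    have h2 := (h1.add hstab).const_mul (1/2:ℝ)
    have : (1/2:ℝ) * (4/3*t + 2/3*t) = t := by ring
    rw [this] at h2
    exact h2.congr fun m => by rw [hT]
  have hm : Filter.Tendsto (fun i : ℕ => (i:ℤ) - j) Filter.atTop Filter.atTop := by
    have := Filter.tendsto_atTop_add_const_right Filter.atTop (-j)
      (tendsto_natCast_atTop_atTop (R := ℤ))
    exact this.congr fun i => by ring
  have hcomp := hphi.comp hm
  have hz : Filter.Tendsto (fun i : ℕ => (2:ℝ)^i *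
      (1 - (1 / 2 : ℝ) * ((∑' l : {l : ℤ // l < (i : ℤ) - j}, k l.1 * (2:ℝ) ^ l.1) -
        k ((i : ℤ) - j) * (2:ℝ) ^ ((i : ℤ) - j)))) Filter.atTop (nhds (t * (2:ℝ)^j)) := by
    have hmul := hcomp.const_mul ((2:ℝ)^j)
    rw [mul_comm] at hmul
    refine hmul.congr fun i => ?_
    rw [hsplit ((i:ℤ) - j)]
    have e1 : (2:ℝ)^(i:ℕ) = (2:ℝ)^j * (2:ℝ)^((i:ℤ)-j) := by
      rw [← zpow_add₀ (two_ne_zero (α := ℝ)), show j + ((i:ℤ)-j) = (i:ℤ) by ring,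
        zpow_natCast]
    have e2 : (4:ℝ)^((i:ℤ)-j) = (2:ℝ)^((i:ℤ)-j) * (2:ℝ)^((i:ℤ)-j) := by
      rw [show (4:ℝ) = 2*2 by norm_num, mul_zpow]
    simp only [Function.comp_apply]
    rw [e2, e1]
    ring
  have := pow_tendsto_exp _ _ hz
  rw [show -(t * (2:ℝ)^j) = -t * (2:ℝ)^j by ring] at this
  exact this
end
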